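/- Let P be a singular X–Y linkage in a graph G, let x ∈ X lie on a nontrivial path P(x) ∈ P with second vertex x', and suppose x has no neighbour in G other than x'. Then P with P(x) replaced by P(x) − x is a singular (X \ {x} ∪ {x'})–Y linkage in G − x. -/

import Mathlib

/-- A path in a simple graph `G`, bundled with its endpoints. -/
structure PathIn (V : Type) (G : SimpleGraph V) where
  a : V
  b : V
  walk : G.Walk a b
  isPath : walk.IsPath

/-- `P` is an `X`–`Y` linkage in `G − S` (paths avoiding the deleted set `S`). -/
def IsLinkageAvoiding {V : Type} (G : SimpleGraph V) (S : Set V) (X Y : Set V)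
    (P : Set (PathIn V G)) : Prop :=
  P.Finite ∧ P.ncard = X.ncard ∧ X.ncard = Y.ncard ∧
  (∀ p ∈ P, p.a ∈ X ∧ p.b ∈ Y) ∧
  (∀ p ∈ P, ∀ v ∈ p.walk.support, v ∉ S) ∧
  (∀ p ∈ P, ∀ q ∈ P, p ≠ q → ∀ v, v ∈ p.walk.support → v ∉ q.walk.support)

/-- `P` is a singular `X`–`Y` linkage in `G − S`: its paths cover all vertices outside `S`
and it is the unique `X`–`Y` linkage in `G − S`. -/
def IsSingularLinkageAvoiding {V : Type} (G : SimpleGraph V) (S : Set V) (X Y : Set V)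
    (P : Set (PathIn V G)) : Prop :=
  IsLinkageAvoiding G S X Y P ∧ (∀ v : V, v ∉ S → ∃ p ∈ P, v ∈ p.walk.support) ∧
  ∀ Q : Set (PathIn V G), IsLinkageAvoiding G S X Y Q → Q = P

lemma linkage_injOn {V : Type} {G : SimpleGraph V} {S X Y : Set V} {P : Set (PathIn V G)}
    (h : IsLinkageAvoiding G S X Y P) : Set.InjOn PathIn.a P := by
  intro r hr s hs hrs
  by_contra hne
  refine h.2.2.2.2.2 r hr s hs hne r.a r.walk.start_mem_support ?_
  rw [hrs]
  exact s.walk.start_mem_support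

lemma linkage_image {V : Type} [Fintype V] {G : SimpleGraph V} {S X Y : Set V}
    {P : Set (PathIn V G)} (h : IsLinkageAvoiding G S X Y P) : PathIn.a '' P = X := by
  apply Set.eq_of_subset_of_ncard_le ?_ ?_ (Set.toFinite X)
  · rintro _ ⟨r, hr, rfl⟩
    exact (h.2.2.2.1 r hr).1
  · rw [Set.ncard_image_of_injOn (linkage_injOn h), h.2.1]

theorem stmt_13 {V : Type} [Fintype V] [DecidableEq V] (G : SimpleGraph V) (X Y : Set V)
    (P : Set (PathIn V G)) (hP : IsSingularLinkageAvoiding G (∅ : Set V) X Y P)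
    (p : PathIn V G) (hp : p ∈ P) (hxX : p.a ∈ X)
    (hnontriv : ¬ p.walk.Nil)
    (x' : V) (hx' : p.walk.support.tail.head? = some x')
    (hdeg : ∀ y : V, G.Adj p.a y → y = x') :
    ∃ q : PathIn V G, q.a = x' ∧ q.b = p.b ∧
      q.walk.support = p.walk.support.tail ∧
      IsSingularLinkageAvoiding G ({p.a} : Set V) ((X \ {p.a}) ∪ {x'}) Y
        (insert q (P \ {p})) := by
  clear hdeg
  obtain ⟨pa, pb, pw, ppath⟩ := p
  simp only at hp hxX hnontriv hx' ⊢
  obtain ⟨u, hadj, w, rfl⟩ := SimpleGraph.Walk.not_nil_iff.mp hnontriv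
  rw [SimpleGraph.Walk.support_cons, List.tail_cons,
    SimpleGraph.Walk.support_eq_cons w] at hx'
  obtain rfl : u = x' := Option.some.inj hx'
  have hppath := ppath
  rw [SimpleGraph.Walk.cons_isPath_iff] at hppath
  obtain ⟨hlink, hcover, huniq⟩ := hP
  obtain ⟨hfin, hPX, hXY, hends, -, hdisj⟩ := id hlink
  set p' : PathIn V G := ⟨pa, pb, SimpleGraph.Walk.cons hadj w, ppath⟩ with hp'def
  set q : PathIn V G := ⟨u, pb, w, hppath.1⟩ with hqdef
  have himg : PathIn.a '' P = X := linkage_image hlink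
  have hinj : Set.InjOn PathIn.a P := linkage_injOn hlink
  have hx'w : u ∈ w.support := w.start_mem_support
  have hx'p : u ∈ p'.walk.support := by
    show u ∈ (SimpleGraph.Walk.cons hadj w).support; rw [SimpleGraph.Walk.support_cons]
    exact List.mem_cons_of_mem _ hx'w
  have hx'ne : u ≠ pa := fun h => hppath.2 (h ▸ hx'w)
  have hx'X : u ∉ X := by
    intro hmem
    rw [← himg] at hmem
    obtain ⟨r, hr, hra⟩ := hmem
    rcases eq_or_ne r p' with rfl | hne
    · exact hx'ne hra.symm
    · refine hdisj p' hp r hr (Ne.symm hne) u hx'p ?_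
      rw [← hra]
      exact r.walk.start_mem_support
  have hqne : q ≠ p' := by
    intro h
    exact hx'ne (congrArg PathIn.a h)
  have hqnotP : q ∉ P := by
    intro hq
    exact hdisj q hq p' hp hqne u hx'w hx'p
  have hpanot : ∀ r ∈ P, r ≠ p' → pa ∉ r.walk.support := by
    intro r hr hne h
    exact hdisj p' hp r hr (Ne.symm hne) pa (p'.walk.start_mem_support) h
  have hXcard : ((X \ {pa}) ∪ {u}).ncard = X.ncard := by
    rw [Set.union_singleton, Set.ncard_insert_of_notMem (fun h => hx'X h.1) (Set.toFinite _),
      Set.ncard_diff_singleton_add_one hxX (Set.toFinite _)]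
  have hP'card : (insert q (P \ {p'})).ncard = X.ncard := by
    rw [Set.ncard_insert_of_notMem (fun h => hqnotP h.1) (hfin.diff),
      Set.ncard_diff_singleton_add_one hp hfin, hPX]
  refine ⟨q, rfl, rfl, rfl, ?_, ?_, ?_⟩
  · -- linkage
    refine ⟨(hfin.diff).insert q, by rw [hP'card, hXcard], by rw [hXcard]; exact hXY,
      ?_, ?_, ?_⟩
    · rintro r (rfl | ⟨hr, hrne⟩)
      · exact ⟨Or.inr rfl, (hends p' hp).2⟩
      · refine ⟨Or.inl ⟨(hends r hr).1, ?_⟩, (hends r hr).2⟩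
        intro h
        exact hrne (hinj hr hp h)
    · rintro r (rfl | ⟨hr, hrne⟩) v hv h
      · exact hppath.2 (h ▸ hv)
      · exact hpanot r hr hrne (h ▸ hv)
    · rintro r (rfl | ⟨hr, hrne⟩) s (rfl | ⟨hs, hsne⟩) hne v hvr hvs
      · exact hne rfl
      · refine hdisj p' hp s hs (Ne.symm hsne) v ?_ hvs
        simp only [p', SimpleGraph.Walk.support_cons]
        exact List.mem_cons_of_mem _ hvr
      · refine hdisj p' hp r hr (Ne.symm hrne) v ?_ hvr
        simp only [p', SimpleGraph.Walk.support_cons]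
        exact List.mem_cons_of_mem _ hvs
      · exact hdisj r hr s hs hne v hvr hvs
  · -- cover
    intro v hv
    obtain ⟨r, hr, hvr⟩ := hcover v (Set.notMem_empty v)
    rcases eq_or_ne r p' with rfl | hne
    · refine ⟨q, Or.inl rfl, ?_⟩
      have hvr' : v = pa ∨ v ∈ w.support := by
        simpa [p', SimpleGraph.Walk.support_cons] using hvr
      rcases hvr' with h | h
      · exact absurd h hv
      · exact h
    · exact ⟨r, Or.inr ⟨hr, hne⟩, hvr⟩
  · -- uniqueness
    intro Q hQ
    obtain ⟨hQfin, hQX, hQXY, hQends, hQavoid, hQdisj⟩ := id hQ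
    have hinjQ : Set.InjOn PathIn.a Q := linkage_injOn hQ
    have himgQ : PathIn.a '' Q = (X \ {pa}) ∪ {u} := linkage_image hQ
    have hx'img : u ∈ PathIn.a '' Q := himgQ ▸ Or.inr rfl
    obtain ⟨q₀, hq₀Q, hq₀a⟩ := hx'img
    obtain ⟨qa, qb, qw, qpath⟩ := q₀
    obtain rfl : u = qa := hq₀a.symm
    have hpaqw : pa ∉ qw.support := fun h => hQavoid _ hq₀Q pa h rfl
    set q₀ : PathIn V G := ⟨u, qb, qw, qpath⟩ with hq₀def
    set q₀p : PathIn V G := ⟨pa, qb, SimpleGraph.Walk.cons hadj qw,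
      (SimpleGraph.Walk.cons_isPath_iff _ _).mpr ⟨qpath, hpaqw⟩⟩ with hq₀pdef
    have hq₀pnot : q₀p ∉ Q := by
      intro h
      exact hQavoid q₀p h pa (q₀p.walk.start_mem_support) rfl
    set Q' : Set (PathIn V G) := insert q₀p (Q \ {q₀}) with hQ'def
    have hQ'link : IsLinkageAvoiding G ∅ X Y Q' := by
      refine ⟨(hQfin.diff).insert q₀p, ?_, hXY, ?_, by simp, ?_⟩
      · rw [Set.ncard_insert_of_notMem (fun h => hq₀pnot h.1) (hQfin.diff),
          Set.ncard_diff_singleton_add_one hq₀Q hQfin, hQX, hXcard]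
      · rintro r (rfl | ⟨hr, hrne⟩)
        · exact ⟨hxX, (hQends q₀ hq₀Q).2⟩
        · refine ⟨?_, (hQends r hr).2⟩
          rcases (hQends r hr).1 with h | h
          · exact h.1
          · exact absurd (hinjQ hr hq₀Q h) hrne
      · rintro r (rfl | ⟨hr, hrne⟩) s (rfl | ⟨hs, hsne⟩) hne v hvr hvs
        · exact hne rfl
        · have hvr' : v = pa ∨ v ∈ qw.support := by
            simpa [q₀p, SimpleGraph.Walk.support_cons] using hvr
          rcases hvr' with h | h
          · exact hQavoid s hs v hvs (by simp [h])
          · exact hQdisj q₀ hq₀Q s hs (Ne.symm hsne) v h hvs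
        · have hvs' : v = pa ∨ v ∈ qw.support := by
            simpa [q₀p, SimpleGraph.Walk.support_cons] using hvs
          rcases hvs' with h | h
          · exact hQavoid r hr v hvr (by simp [h])
          · exact hQdisj q₀ hq₀Q r hr (Ne.symm hrne) v h hvr
        · exact hQdisj r hr s hs hne v hvr hvs
    have hQ'P : Q' = P := huniq Q' hQ'link
    have hpq : p' = q₀p := by
      have hpQ' : p' ∈ Q' := hQ'P ▸ hp
      rcases hpQ' with h | ⟨h, -⟩
      · exact h
      · exact absurd (p'.walk.start_mem_support) (fun hmem => hQavoid p' h pa hmem rfl)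
    have hb : pb = qb := congrArg PathIn.b hpq
    subst hb
    have hwalkeq : SimpleGraph.Walk.cons hadj w = SimpleGraph.Walk.cons hadj qw := by
      have h : HEq p'.walk q₀p.walk := by rw [hpq]
      exact eq_of_heq h
    have hwq : w = qw := by
      simpa using hwalkeq
    subst hwq
    have hqq₀ : q = q₀ := rfl
    have hdiffeq : P \ {p'} = Q \ {q₀} := by
      rw [← hQ'P, hpq, hQ'def, Set.insert_diff_self_of_notMem (fun h => hq₀pnot h.1)]
    rw [hqq₀, hdiffeq, Set.insert_diff_singleton, Set.insert_eq_self.mpr hq₀Q]
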